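/- Let (a,i) and (a',j) be edges in E and n ≥ 1 such that the set Γ of directed paths of length n from (a,i) to (a',j) in the oriented line graph is nonempty, and let B^{(n)} = (1/|Γ|) Σ_{γ∈Γ} B^γ be the averaged kernel. If x ∈ ℝ^q satisfies ⟨x⟩_{b_i} = 0 and y ∈ ℝ^q is defined by y_l·b_j(l) = Σ_k x_k·b_i(k)·B^{(n)}_{kl} for each l, then ‖y‖_{b_j} ≤ μ₂^n·‖x‖_{b_i}. -/

import Mathlib

open Finset

variable {V F : Type*} [Fintype V] [DecidableEq V] [Fintype F] [DecidableEq F]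

/-- Configurations on the factor `a`: tuples `x_a ∈ {1,…,q}^a`. -/
abbrev Config (S : F → Finset V) (q : ℕ) (a : F) := {i : V // i ∈ S a} → Fin q

/-- The conditional-belief matrix `B^{(iaj)}`, with entries
`B^{(iaj)}_{kl} = (1/b_i(k)) Σ_{x_a : x_i = k, x_j = l} b_a(x_a)`. -/
noncomputable def Bmat (S : F → Finset V) {q : ℕ} (bv : V → Fin q → ℝ)
    (bf : ∀ a : F, Config S q a → ℝ) (a : F) (i j : V) :
    Matrix (Fin q) (Fin q) ℝ :=
  Matrix.of fun k l => (1 / bv i k) *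
    ∑ y ∈ univ.filter (fun y : Config S q a =>
        ∀ v : {v : V // v ∈ S a}, (v.1 = i → y v = k) ∧ (v.1 = j → y v = l)),
      bf a y

/-- The combined stochastic kernel `K^{(iaj)} = B^{(iaj)} B^{(jai)}`. -/
noncomputable def Kmat (S : F → Finset V) {q : ℕ} (bv : V → Fin q → ℝ)
    (bf : ∀ a : F, Config S q a → ℝ) (a : F) (i j : V) :
    Matrix (Fin q) (Fin q) ℝ :=
  Bmat S bv bf a i j * Bmat S bv bf a j i

/-- `μ₂^{(iaj)}`: the second eigenvalue of `K^{(iaj)}`, as the supremum of the Rayleigh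
quotient over nonzero vectors with zero `b_i`-mean. -/
noncomputable def mu2 (S : F → Finset V) {q : ℕ} (bv : V → Fin q → ℝ)
    (bf : ∀ a : F, Config S q a → ℝ) (a : F) (i j : V) : ℝ :=
  sSup {r : ℝ | ∃ x : Fin q → ℝ, x ≠ 0 ∧ (∑ k, x k * bv i k) = 0 ∧
    r = (∑ k, ∑ l, x k * x l * Kmat S bv bf a i j k l * bv i k) /
        (∑ k, x k ^ 2 * bv i k)}

/-- The 0-1 adjacency matrix `A` of the oriented line graph `L(G)`:
`A_{(a,i),(a',j)} = 1` iff `j ∈ a ∩ a'`, `j ≠ i` and `a' ≠ a`. -/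
noncomputable def Amat (S : F → Finset V) : Matrix (F × V) (F × V) ℝ :=
  Matrix.of fun e e' =>
    if e'.2 ∈ S e.1 ∧ e'.2 ∈ S e'.1 ∧ e'.2 ≠ e.2 ∧ e'.1 ≠ e.1 then 1 else 0

/-- Directed paths of length `n` from `e` to `e'` in the oriented line graph. -/
def pathSet (S : F → Finset V) (n : ℕ) (e e' : F × V) :
    Finset (Fin (n + 1) → F × V) :=
  univ.filter (fun γ => γ 0 = e ∧ γ (Fin.last n) = e' ∧
    ∀ t : Fin n,
      (γ t.succ).2 ∈ S (γ t.castSucc).1 ∧ (γ t.succ).2 ∈ S (γ t.succ).1 ∧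
      (γ t.succ).2 ≠ (γ t.castSucc).2 ∧ (γ t.succ).1 ≠ (γ t.castSucc).1)

/-- The stochastic kernel of a path: `B^γ = B^{(i_0 a_0 i_1)} ⋯ B^{(i_{n-1} a_{n-1} i_n)}`. -/
noncomputable def pathKernel (S : F → Finset V) {q : ℕ} (bv : V → Fin q → ℝ)
    (bf : ∀ a : F, Config S q a → ℝ) {n : ℕ} (γ : Fin (n + 1) → F × V) :
    Matrix (Fin q) (Fin q) ℝ :=
  (List.ofFn fun t : Fin n =>
    Bmat S bv bf (γ t.castSucc).1 (γ t.castSucc).2 (γ t.succ).2).prod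

/-- `μ₂ = max_{(iaj)} √(μ₂^{(iaj)})`, the maximum over all triples `(i,a,j)` with
`i ≠ j` both in `a`. -/
noncomputable def mu2max (S : F → Finset V) {q : ℕ} (bv : V → Fin q → ℝ)
    (bf : ∀ a : F, Config S q a → ℝ) : ℝ :=
  sSup {r : ℝ | ∃ (a : F) (i j : V), i ∈ S a ∧ j ∈ S a ∧ i ≠ j ∧
    r = Real.sqrt (mu2 S bv bf a i j)}


section helpers
set_option linter.unusedSectionVars false
variable {q : ℕ} (S : F → Finset V) (bv : V → Fin q → ℝ) (bf : ∀ a : F, Config S q a → ℝ)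

lemma Bmat_nonneg (hbv : ∀ i x, 0 < bv i x) (hbf : ∀ a y, 0 < bf a y)
    (a : F) (i j : V) (k l : Fin q) : 0 ≤ Bmat S bv bf a i j k l := by
  unfold Bmat
  simp only [Matrix.of_apply]
  have := hbv i k
  exact mul_nonneg (by positivity) (Finset.sum_nonneg fun y _ => (hbf a y).le)

lemma filter_eq_aux (a : F) {i j : V} (hi : i ∈ S a) (hj : j ∈ S a) (k l : Fin q) :
    (univ.filter (fun y : Config S q a =>
        ∀ v : {v : V // v ∈ S a}, (v.1 = i → y v = k) ∧ (v.1 = j → y v = l))) =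
    univ.filter (fun y : Config S q a => y ⟨i, hi⟩ = k ∧ y ⟨j, hj⟩ = l) := by
  apply Finset.filter_congr
  intro y _
  constructor
  · intro h; exact ⟨(h ⟨i, hi⟩).1 rfl, (h ⟨j, hj⟩).2 rfl⟩
  · rintro ⟨h1, h2⟩ ⟨v, hv⟩
    constructor
    · rintro rfl; exact h1
    · rintro rfl; exact h2

lemma Bmat_rev (hbv : ∀ i x, 0 < bv i x) (a : F) (i j : V) (k l : Fin q) :
    bv i k * Bmat S bv bf a i j k l = bv j l * Bmat S bv bf a j i l k := by
  unfold Bmat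
  simp only [Matrix.of_apply]
  rw [← mul_assoc, mul_one_div_cancel (hbv i k).ne', one_mul,
      ← mul_assoc, mul_one_div_cancel (hbv j l).ne', one_mul]
  apply Finset.sum_congr _ (fun _ _ => rfl)
  apply Finset.filter_congr
  intro y _
  constructor
  · intro h v; exact ⟨(h v).2, (h v).1⟩
  · intro h v; exact ⟨(h v).2, (h v).1⟩

lemma Bmat_row_sum
    (hbv : ∀ i x, 0 < bv i x)
    (hcompat : ∀ a i (hi : i ∈ S a) (k : Fin q),
      ∑ y ∈ univ.filter (fun y : Config S q a => y ⟨i, hi⟩ = k), bf a y = bv i k)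
    (a : F) {i j : V} (hi : i ∈ S a) (hj : j ∈ S a) (k : Fin q) :
    ∑ l, Bmat S bv bf a i j k l = 1 := by
  unfold Bmat
  simp only [Matrix.of_apply]
  rw [← Finset.mul_sum]
  have key : ∑ l, ∑ y ∈ univ.filter (fun y : Config S q a =>
      ∀ v : {v : V // v ∈ S a}, (v.1 = i → y v = k) ∧ (v.1 = j → y v = l)), bf a y
      = bv i k := by
    rw [← hcompat a i hi k]
    rw [Finset.sum_congr rfl (fun l _ => by
      rw [filter_eq_aux S a hi hj k l, ← Finset.filter_filter])]
    exact Finset.sum_fiberwise_of_maps_to (fun y _ => mem_univ _) _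
  rw [key, one_div, inv_mul_cancel₀ (hbv i k).ne']




/-- Transport of a vector `x` (based at `i`) along a kernel `M` to a vector based at `j`. -/
noncomputable def transp (i j : V) (M : Matrix (Fin q) (Fin q) ℝ) (x : Fin q → ℝ) :
    Fin q → ℝ :=
  fun l => (bv j l)⁻¹ * ∑ k, x k * bv i k * M k l

lemma transp_mul_bv (hbv : ∀ i x, 0 < bv i x) (i j : V) (M : Matrix (Fin q) (Fin q) ℝ)
    (x : Fin q → ℝ) (l : Fin q) :
    transp bv i j M x l * bv j l = ∑ k, x k * bv i k * M k l := by
  unfold transp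
  rw [mul_comm, ← mul_assoc, mul_inv_cancel₀ (hbv j l).ne', one_mul]

lemma sum_rev (hbv : ∀ i x, 0 < bv i x) (a : F) (i j : V) (x : Fin q → ℝ) (l : Fin q) :
    ∑ k, x k * bv i k * Bmat S bv bf a i j k l
      = bv j l * ∑ k, Bmat S bv bf a j i l k * x k := by
  rw [Finset.mul_sum]
  apply Finset.sum_congr rfl
  intro k _
  rw [mul_assoc, Bmat_rev S bv bf hbv a i j k l]
  ring

lemma transp_step_apply (hbv : ∀ i x, 0 < bv i x) (a : F) (i j : V) (x : Fin q → ℝ)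
    (l : Fin q) :
    transp bv i j (Bmat S bv bf a i j) x l = ∑ k, Bmat S bv bf a j i l k * x k := by
  unfold transp
  rw [sum_rev S bv bf hbv, ← mul_assoc, inv_mul_cancel₀ (hbv j l).ne', one_mul]

lemma step_mean
    (hbv : ∀ i x, 0 < bv i x)
    (hcompat : ∀ a i (hi : i ∈ S a) (k : Fin q),
      ∑ y ∈ univ.filter (fun y : Config S q a => y ⟨i, hi⟩ = k), bf a y = bv i k)
    (a : F) {i j : V} (hi : i ∈ S a) (hj : j ∈ S a) (x : Fin q → ℝ)
    (hx : ∑ k, x k * bv i k = 0) :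
    ∑ l, transp bv i j (Bmat S bv bf a i j) x l * bv j l = 0 := by
  rw [Finset.sum_congr rfl (fun l _ => transp_mul_bv bv hbv i j _ x l)]
  rw [Finset.sum_comm]
  rw [Finset.sum_congr rfl (fun k (_ : k ∈ univ) => by
    rw [← Finset.mul_sum, Bmat_row_sum S bv bf hbv hcompat a hi hj k, mul_one])]
  exact hx

lemma step_normsq_eq (hbv : ∀ i x, 0 < bv i x) (a : F) (i j : V) (x : Fin q → ℝ) :
    ∑ l, (transp bv i j (Bmat S bv bf a i j) x l) ^ 2 * bv j l
      = ∑ k, ∑ m, x k * x m * Kmat S bv bf a i j k m * bv i k := by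
  have hg : ∀ l, transp bv i j (Bmat S bv bf a i j) x l
      = ∑ m, Bmat S bv bf a j i l m * x m := transp_step_apply S bv bf hbv a i j x
  calc ∑ l, (transp bv i j (Bmat S bv bf a i j) x l) ^ 2 * bv j l
      = ∑ l, (∑ k, x k * bv i k * Bmat S bv bf a i j k l)
          * (∑ m, Bmat S bv bf a j i l m * x m) := by
        apply Finset.sum_congr rfl; intro l _
        rw [sum_rev S bv bf hbv, hg l, sq]; ring
    _ = ∑ l, ∑ k, ∑ m, x k * bv i k * Bmat S bv bf a i j k l
          * (Bmat S bv bf a j i l m * x m) := by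
        apply Finset.sum_congr rfl; intro l _
        rw [Finset.sum_mul_sum]
    _ = ∑ k, ∑ m, x k * x m * Kmat S bv bf a i j k m * bv i k := by
        rw [Finset.sum_comm]
        apply Finset.sum_congr rfl; intro k _
        rw [Finset.sum_comm]
        apply Finset.sum_congr rfl; intro m _
        unfold Kmat
        rw [Matrix.mul_apply, Finset.mul_sum, Finset.sum_mul]
        apply Finset.sum_congr rfl; intro l _
        ring

lemma step_normsq_le
    (hbv : ∀ i x, 0 < bv i x) (hbf : ∀ a y, 0 < bf a y)
    (hcompat : ∀ a i (hi : i ∈ S a) (k : Fin q),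
      ∑ y ∈ univ.filter (fun y : Config S q a => y ⟨i, hi⟩ = k), bf a y = bv i k)
    (a : F) {i j : V} (hi : i ∈ S a) (hj : j ∈ S a) (x : Fin q → ℝ) :
    ∑ l, (transp bv i j (Bmat S bv bf a i j) x l) ^ 2 * bv j l
      ≤ ∑ k, x k ^ 2 * bv i k := by
  have jensen : ∀ l, (transp bv i j (Bmat S bv bf a i j) x l) ^ 2
      ≤ ∑ k, Bmat S bv bf a j i l k * x k ^ 2 := by
    intro l
    rw [transp_step_apply S bv bf hbv a i j x l]
    have cs := Finset.sum_mul_sq_le_sq_mul_sq univ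
      (fun k => Real.sqrt (Bmat S bv bf a j i l k))
      (fun k => Real.sqrt (Bmat S bv bf a j i l k) * x k)
    have h1 : ∀ k : Fin q, Real.sqrt (Bmat S bv bf a j i l k)
        * (Real.sqrt (Bmat S bv bf a j i l k) * x k) = Bmat S bv bf a j i l k * x k := by
      intro k
      rw [← mul_assoc, Real.mul_self_sqrt (Bmat_nonneg S bv bf hbv hbf a j i l k)]
    have h2 : ∀ k : Fin q, Real.sqrt (Bmat S bv bf a j i l k) ^ 2
        = Bmat S bv bf a j i l k := fun k =>
      Real.sq_sqrt (Bmat_nonneg S bv bf hbv hbf a j i l k)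
    have h3 : ∀ k : Fin q, (Real.sqrt (Bmat S bv bf a j i l k) * x k) ^ 2
        = Bmat S bv bf a j i l k * x k ^ 2 := by
      intro k; rw [mul_pow, h2]
    rw [Finset.sum_congr rfl (fun k _ => h1 k), Finset.sum_congr rfl (fun k _ => h2 k),
      Finset.sum_congr rfl (fun k _ => h3 k),
      Bmat_row_sum S bv bf hbv hcompat a hj hi l, one_mul] at cs
    exact cs
  calc ∑ l, (transp bv i j (Bmat S bv bf a i j) x l) ^ 2 * bv j l
      ≤ ∑ l, (∑ k, Bmat S bv bf a j i l k * x k ^ 2) * bv j l := by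
        apply Finset.sum_le_sum; intro l _
        exact mul_le_mul_of_nonneg_right (jensen l) (hbv j l).le
    _ = ∑ k, x k ^ 2 * bv i k := by
        rw [Finset.sum_congr rfl (fun l (_ : l ∈ univ) => Finset.sum_mul _ _ _),
          Finset.sum_comm]
        apply Finset.sum_congr rfl; intro k _
        calc ∑ l, Bmat S bv bf a j i l k * x k ^ 2 * bv j l
            = ∑ l, x k ^ 2 * (bv i k * Bmat S bv bf a i j k l) := by
              apply Finset.sum_congr rfl; intro l _
              rw [Bmat_rev S bv bf hbv a i j k l]; ring
          _ = x k ^ 2 * bv i k := by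
              rw [← Finset.mul_sum, ← Finset.mul_sum,
                Bmat_row_sum S bv bf hbv hcompat a hi hj k, mul_one]


lemma mu2max_bddAbove :
    BddAbove {r : ℝ | ∃ (a : F) (i j : V), i ∈ S a ∧ j ∈ S a ∧ i ≠ j ∧
      r = Real.sqrt (mu2 S bv bf a i j)} := by
  apply Set.Finite.bddAbove
  apply Set.Finite.subset
    (Set.finite_range (fun t : F × V × V => Real.sqrt (mu2 S bv bf t.1 t.2.1 t.2.2)))
  rintro r ⟨a, i, j, _, _, _, rfl⟩
  exact ⟨(a, i, j), rfl⟩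

lemma sqrt_mu2_le_mu2max (a : F) {i j : V} (hi : i ∈ S a) (hj : j ∈ S a) (hij : i ≠ j) :
    Real.sqrt (mu2 S bv bf a i j) ≤ mu2max S bv bf :=
  le_csSup (mu2max_bddAbove S bv bf) ⟨a, i, j, hi, hj, hij, rfl⟩

lemma mu2max_nonneg (a : F) {i j : V} (hi : i ∈ S a) (hj : j ∈ S a) (hij : i ≠ j) :
    0 ≤ mu2max S bv bf :=
  le_trans (Real.sqrt_nonneg _) (sqrt_mu2_le_mu2max S bv bf a hi hj hij)

lemma step_contract
    (hbv : ∀ i x, 0 < bv i x) (hbf : ∀ a y, 0 < bf a y)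
    (hcompat : ∀ a i (hi : i ∈ S a) (k : Fin q),
      ∑ y ∈ univ.filter (fun y : Config S q a => y ⟨i, hi⟩ = k), bf a y = bv i k)
    (a : F) {i j : V} (hi : i ∈ S a) (hj : j ∈ S a) (hij : i ≠ j) (x : Fin q → ℝ)
    (hx : ∑ k, x k * bv i k = 0) :
    Real.sqrt (∑ l, (transp bv i j (Bmat S bv bf a i j) x l) ^ 2 * bv j l)
      ≤ mu2max S bv bf * Real.sqrt (∑ k, x k ^ 2 * bv i k) := by
  by_cases hx0 : x = 0
  · subst hx0
    simp [transp]
  · set den := ∑ k, x k ^ 2 * bv i k with hden_def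
    set num := ∑ l, (transp bv i j (Bmat S bv bf a i j) x l) ^ 2 * bv j l with hnum_def
    obtain ⟨k0, hk0⟩ := Function.ne_iff.mp hx0
    have hk0' : x k0 ≠ 0 := hk0
    have hden : 0 < den := by
      apply Finset.sum_pos' (fun k _ => by have := hbv i k; positivity)
      exact ⟨k0, mem_univ _, by have := hbv i k0; positivity⟩
    have hnum_nonneg : 0 ≤ num := Finset.sum_nonneg fun l _ => by
      have := hbv j l; positivity
    have hbdd : BddAbove {r : ℝ | ∃ x : Fin q → ℝ, x ≠ 0 ∧ (∑ k, x k * bv i k) = 0 ∧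
        r = (∑ k, ∑ l, x k * x l * Kmat S bv bf a i j k l * bv i k) /
            (∑ k, x k ^ 2 * bv i k)} := by
      refine ⟨1, ?_⟩
      rintro r ⟨z, hz0, hzm, rfl⟩
      obtain ⟨m0, hm0⟩ := Function.ne_iff.mp hz0
      have hm0' : z m0 ≠ 0 := hm0
      have hzden : 0 < ∑ k, z k ^ 2 * bv i k := by
        apply Finset.sum_pos' (fun k _ => by have := hbv i k; positivity)
        exact ⟨m0, mem_univ _, by have := hbv i m0; positivity⟩
      rw [div_le_one hzden, ← step_normsq_eq S bv bf hbv a i j z]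
      exact step_normsq_le S bv bf hbv hbf hcompat a hi hj z
    have hmem : num / den ∈ {r : ℝ | ∃ x : Fin q → ℝ, x ≠ 0 ∧ (∑ k, x k * bv i k) = 0 ∧
        r = (∑ k, ∑ l, x k * x l * Kmat S bv bf a i j k l * bv i k) /
            (∑ k, x k ^ 2 * bv i k)} :=
      ⟨x, hx0, hx, by rw [← step_normsq_eq S bv bf hbv a i j x]⟩
    have hle : num / den ≤ mu2 S bv bf a i j := le_csSup hbdd hmem
    have hmu_nonneg : 0 ≤ mu2 S bv bf a i j :=
      le_trans (div_nonneg hnum_nonneg hden.le) hle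
    have hnum_le : num ≤ mu2 S bv bf a i j * den := (div_le_iff₀ hden).mp hle
    calc Real.sqrt num ≤ Real.sqrt (mu2 S bv bf a i j * den) :=
          Real.sqrt_le_sqrt hnum_le
      _ = Real.sqrt (mu2 S bv bf a i j) * Real.sqrt den := Real.sqrt_mul hmu_nonneg den
      _ ≤ mu2max S bv bf * Real.sqrt den :=
          mul_le_mul_of_nonneg_right (sqrt_mu2_le_mu2max S bv bf a hi hj hij)
            (Real.sqrt_nonneg den)


def chainFrom (S : F → Finset V) : V → V → List (F × V × V) → Prop
  | i, j, [] => i = j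
  | i, j, t :: L => t.2.1 = i ∧ t.2.1 ∈ S t.1 ∧ t.2.2 ∈ S t.1 ∧ t.2.1 ≠ t.2.2 ∧
      chainFrom S t.2.2 j L

noncomputable def listKernel (L : List (F × V × V)) : Matrix (Fin q) (Fin q) ℝ :=
  (L.map fun t => Bmat S bv bf t.1 t.2.1 t.2.2).prod

lemma chain_contract
    (hbv : ∀ i x, 0 < bv i x) (hbf : ∀ a y, 0 < bf a y)
    (hcompat : ∀ a i (hi : i ∈ S a) (k : Fin q),
      ∑ y ∈ univ.filter (fun y : Config S q a => y ⟨i, hi⟩ = k), bf a y = bv i k)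
    (hm : 0 ≤ mu2max S bv bf) :
    ∀ (L : List (F × V × V)) (i j : V), chainFrom S i j L →
      ∀ x : Fin q → ℝ, (∑ k, x k * bv i k) = 0 →
      (∑ l, transp bv i j (listKernel S bv bf L) x l * bv j l = 0) ∧
      Real.sqrt (∑ l, (transp bv i j (listKernel S bv bf L) x l) ^ 2 * bv j l)
        ≤ mu2max S bv bf ^ L.length * Real.sqrt (∑ k, x k ^ 2 * bv i k) := by
  intro L
  induction L with
  | nil =>
    intro i j hc x hx
    obtain rfl : i = j := hc
    have hT : transp bv i i (listKernel S bv bf []) x = x := by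
      funext l
      unfold listKernel transp
      simp only [List.map_nil, List.prod_nil, Matrix.one_apply, mul_ite, mul_one, mul_zero,
        Finset.sum_ite_eq', mem_univ, if_true]
      rw [mul_comm (x l), ← mul_assoc, inv_mul_cancel₀ (hbv i l).ne', one_mul]
    rw [hT]
    exact ⟨hx, by rw [List.length_nil, pow_zero, one_mul]⟩
  | cons t L ih =>
    obtain ⟨a, u, v⟩ := t
    rintro i j ⟨rfl, hu, hv, huv, hc⟩ x hx
    set y := transp bv u v (Bmat S bv bf a u v) x with hy_def
    have hsplit : transp bv u j (listKernel S bv bf ((a, u, v) :: L)) x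
        = transp bv v j (listKernel S bv bf L) y := by
      funext l
      unfold transp listKernel
      rw [List.map_cons, List.prod_cons]
      congr 1
      calc ∑ k, x k * bv u k
            * (Bmat S bv bf a u v * (List.map (fun t => Bmat S bv bf t.1 t.2.1 t.2.2) L).prod) k l
          = ∑ k, ∑ m, x k * bv u k * Bmat S bv bf a u v k m
              * (List.map (fun t => Bmat S bv bf t.1 t.2.1 t.2.2) L).prod m l := by
            apply Finset.sum_congr rfl; intro k _
            rw [Matrix.mul_apply, Finset.mul_sum]
            apply Finset.sum_congr rfl; intro m _; ring
        _ = ∑ m, y m * bv v m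
              * (List.map (fun t => Bmat S bv bf t.1 t.2.1 t.2.2) L).prod m l := by
            rw [Finset.sum_comm]
            apply Finset.sum_congr rfl; intro m _
            rw [← Finset.sum_mul, ← transp_mul_bv bv hbv u v _ x m]
    have hymean : ∑ m, y m * bv v m = 0 :=
      step_mean S bv bf hbv hcompat a hu hv x hx
    obtain ⟨ih1, ih2⟩ := ih v j hc y hymean
    rw [hsplit]
    refine ⟨ih1, ?_⟩
    calc Real.sqrt (∑ l, (transp bv v j (listKernel S bv bf L) y l) ^ 2 * bv j l)
        ≤ mu2max S bv bf ^ L.length * Real.sqrt (∑ m, y m ^ 2 * bv v m) := ih2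
      _ ≤ mu2max S bv bf ^ L.length
          * (mu2max S bv bf * Real.sqrt (∑ k, x k ^ 2 * bv u k)) := by
          apply mul_le_mul_of_nonneg_left _ (pow_nonneg hm _)
          exact step_contract S bv bf hbv hbf hcompat a hu hv huv x hx
      _ = mu2max S bv bf ^ ((a, u, v) :: L).length
          * Real.sqrt (∑ k, x k ^ 2 * bv u k) := by
          rw [List.length_cons, pow_succ]; ring


def pathList {n : ℕ} (γ : Fin (n + 1) → F × V) : List (F × V × V) :=
  List.ofFn fun t : Fin n => ((γ t.castSucc).1, (γ t.castSucc).2, (γ t.succ).2)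

lemma listKernel_pathList {n : ℕ} (γ : Fin (n + 1) → F × V) :
    listKernel S bv bf (pathList γ) = pathKernel S bv bf γ := by
  unfold listKernel pathList pathKernel
  rw [List.map_ofFn]
  rfl

lemma pathList_length {n : ℕ} (γ : Fin (n + 1) → F × V) : (pathList γ).length = n := by
  unfold pathList; rw [List.length_ofFn]

lemma chain_of_path : ∀ (n : ℕ) (γ : Fin (n + 1) → F × V),
    (γ 0).2 ∈ S (γ 0).1 →
    (∀ t : Fin n, (γ t.succ).2 ∈ S (γ t.castSucc).1 ∧ (γ t.succ).2 ∈ S (γ t.succ).1 ∧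
      (γ t.succ).2 ≠ (γ t.castSucc).2 ∧ (γ t.succ).1 ≠ (γ t.castSucc).1) →
    chainFrom S (γ 0).2 (γ (Fin.last n)).2 (pathList γ) := by
  intro n
  induction n with
  | zero =>
    intro γ _ _
    show chainFrom S (γ 0).2 (γ (Fin.last 0)).2 []
    rfl
  | succ n ih =>
    intro γ h0 hcond
    have hofn : pathList γ = ((γ (0 : Fin (n + 1)).castSucc).1, (γ (0 : Fin (n + 1)).castSucc).2,
        (γ (0 : Fin (n + 1)).succ).2) :: pathList (γ ∘ Fin.succ) := by
      unfold pathList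
      rw [List.ofFn_succ]
      congr 1
    rw [hofn]
    have hc0 := hcond 0
    refine ⟨by simp, by simpa using h0, by simpa using hc0.1, ?_, ?_⟩
    · simpa using hc0.2.2.1.symm
    · have htail := ih (γ ∘ Fin.succ) (by simpa using hc0.2.1)
        (fun t => by
          have := hcond t.succ
          simpa only [Function.comp_apply, Fin.succ_castSucc] using this)
      simp only [Function.comp_apply, Fin.succ_last] at htail
      simpa using htail

end helpers

/-- Path-averaged contraction: if `⟨x⟩_{b_i} = 0` and `y` is the image of `x` under the
kernel `B^{(n)}` averaged over the directed paths of length `n` from `(a,i)` to `(a',j)`,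
then `‖y‖_{b_j} ≤ μ₂ⁿ ‖x‖_{b_i}`. -/
theorem path_averaged_contraction
    (q : ℕ) (hq : 2 ≤ q) (S : F → Finset V) (hcard : ∀ a, 2 ≤ (S a).card)
    (bv : V → Fin q → ℝ) (bf : ∀ a : F, Config S q a → ℝ)
    (hbv : ∀ i x, 0 < bv i x) (hbf : ∀ a y, 0 < bf a y)
    (hsumv : ∀ i, ∑ x, bv i x = 1)
    (hsumf : ∀ a, ∑ y : Config S q a, bf a y = 1)
    (hcompat : ∀ a i (hi : i ∈ S a) (k : Fin q),
      ∑ y ∈ univ.filter (fun y : Config S q a => y ⟨i, hi⟩ = k), bf a y = bv i k)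
    (a a' : F) (i j : V) (hi : i ∈ S a) (hj : j ∈ S a')
    (n : ℕ) (hn : 1 ≤ n) (hne : (pathSet S n (a, i) (a', j)).Nonempty)
    (x y : Fin q → ℝ)
    (hx : ∑ k, x k * bv i k = 0)
    (hy : ∀ l, y l * bv j l = ∑ k, x k * bv i k *
      (((pathSet S n (a, i) (a', j)).card : ℝ)⁻¹ •
        ∑ γ ∈ pathSet S n (a, i) (a', j), pathKernel S bv bf γ) k l) :
    Real.sqrt (∑ l, y l ^ 2 * bv j l)
      ≤ mu2max S bv bf ^ n * Real.sqrt (∑ k, x k ^ 2 * bv i k) := by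
  classical
  have hμ0 : 0 ≤ mu2max S bv bf := by
    obtain ⟨u, hu, v, hv, huv⟩ := Finset.one_lt_card.mp (hcard a)
    exact mu2max_nonneg S bv bf a hu hv huv
  set Γ := pathSet S n (a, i) (a', j) with hΓdef
  set z : (Fin (n + 1) → F × V) → Fin q → ℝ :=
    fun γ => transp bv i j (pathKernel S bv bf γ) x with hzdef
  have hbound : ∀ γ ∈ Γ, Real.sqrt (∑ l, (z γ l) ^ 2 * bv j l)
      ≤ mu2max S bv bf ^ n * Real.sqrt (∑ k, x k ^ 2 * bv i k) := by
    intro γ hγ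
    obtain ⟨-, hγ0, hγl, hγc⟩ := Finset.mem_filter.mp hγ
    have hchain := chain_of_path S n γ (by rw [hγ0]; exact hi) hγc
    rw [hγ0, hγl] at hchain
    have hcc := chain_contract S bv bf hbv hbf hcompat hμ0 (pathList γ) i j hchain x hx
    rw [listKernel_pathList, pathList_length] at hcc
    exact hcc.2
  have hcpos : (0 : ℝ) < Γ.card := by
    exact_mod_cast Finset.card_pos.mpr hne
  have hyz : ∀ l, y l = (Γ.card : ℝ)⁻¹ * ∑ γ ∈ Γ, z γ l := by
    intro l
    have h1 : y l * bv j l = ((Γ.card : ℝ)⁻¹ * ∑ γ ∈ Γ, z γ l) * bv j l := by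
      rw [hy l]
      have hk : ∀ k : Fin q, x k * bv i k
            * ((Γ.card : ℝ)⁻¹ * ∑ γ ∈ Γ, pathKernel S bv bf γ k l)
          = ∑ γ ∈ Γ, (Γ.card : ℝ)⁻¹ * (x k * bv i k * pathKernel S bv bf γ k l) := by
        intro k
        rw [Finset.mul_sum, Finset.mul_sum]
        apply Finset.sum_congr rfl; intro γ _; ring
      calc ∑ k, x k * bv i k *
            (((Γ.card : ℝ)⁻¹ • ∑ γ ∈ Γ, pathKernel S bv bf γ) k l)
          = ∑ k, ∑ γ ∈ Γ, (Γ.card : ℝ)⁻¹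
              * (x k * bv i k * pathKernel S bv bf γ k l) := by
            simp only [Matrix.smul_apply, Matrix.sum_apply, smul_eq_mul]
            exact Finset.sum_congr rfl (fun k _ => hk k)
        _ = ∑ γ ∈ Γ, (Γ.card : ℝ)⁻¹
              * ∑ k, x k * bv i k * pathKernel S bv bf γ k l := by
            rw [Finset.sum_comm]
            exact Finset.sum_congr rfl (fun γ _ => (Finset.mul_sum _ _ _).symm)
        _ = ∑ γ ∈ Γ, (Γ.card : ℝ)⁻¹ * (z γ l * bv j l) := by
            apply Finset.sum_congr rfl; intro γ _
            rw [transp_mul_bv bv hbv i j (pathKernel S bv bf γ) x l]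
        _ = ((Γ.card : ℝ)⁻¹ * ∑ γ ∈ Γ, z γ l) * bv j l := by
            rw [← Finset.mul_sum, mul_assoc, Finset.sum_mul]
    exact mul_right_cancel₀ (hbv j l).ne' h1
  set E : (Fin q → ℝ) → EuclideanSpace ℝ (Fin q) :=
    fun v => (WithLp.equiv 2 (Fin q → ℝ)).symm (fun l => v l * Real.sqrt (bv j l)) with hEdef
  have hnormeq : ∀ v : Fin q → ℝ, ‖E v‖ = Real.sqrt (∑ l, v l ^ 2 * bv j l) := by
    intro v
    simp only [hEdef]
    rw [EuclideanSpace.norm_eq]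
    congr 1
    apply Finset.sum_congr rfl
    intro l _
    rw [WithLp.equiv_symm_apply, PiLp.toLp_apply, Real.norm_eq_abs, sq_abs, mul_pow,
      Real.sq_sqrt (hbv j l).le]
  have key : E y = (Γ.card : ℝ)⁻¹ • ∑ γ ∈ Γ, E (z γ) := by
    have hsum : ∑ γ ∈ Γ, E (z γ)
        = (WithLp.equiv 2 (Fin q → ℝ)).symm
            (∑ γ ∈ Γ, fun l => z γ l * Real.sqrt (bv j l)) :=
      (map_sum (WithLp.linearEquiv 2 ℝ (Fin q → ℝ)).symm _ Γ).symm
    simp only [hEdef]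
    rw [hsum, WithLp.equiv_symm_apply, ← WithLp.toLp_smul]
    congr 1
    funext l
    simp only [Pi.smul_apply, smul_eq_mul, Finset.sum_apply]
    rw [hyz l, mul_assoc, Finset.sum_mul]
  calc Real.sqrt (∑ l, y l ^ 2 * bv j l)
      = ‖E y‖ := (hnormeq y).symm
    _ = ‖(Γ.card : ℝ)⁻¹ • ∑ γ ∈ Γ, E (z γ)‖ := by rw [key]
    _ ≤ (Γ.card : ℝ)⁻¹ * ∑ γ ∈ Γ, ‖E (z γ)‖ := by
        rw [norm_smul, Real.norm_eq_abs, abs_of_nonneg (by positivity)]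
        exact mul_le_mul_of_nonneg_left (norm_sum_le _ _) (by positivity)
    _ ≤ (Γ.card : ℝ)⁻¹ *
          ∑ _γ ∈ Γ, (mu2max S bv bf ^ n * Real.sqrt (∑ k, x k ^ 2 * bv i k)) := by
        apply mul_le_mul_of_nonneg_left _ (by positivity)
        apply Finset.sum_le_sum
        intro γ hγ
        rw [hnormeq (z γ)]
        exact hbound γ hγ
    _ = mu2max S bv bf ^ n * Real.sqrt (∑ k, x k ^ 2 * bv i k) := by
        rw [Finset.sum_const, nsmul_eq_mul, ← mul_assoc, inv_mul_cancel₀ hcpos.ne', one_mul]
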